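/- For the comply-number game with move family T = { {d, 2d} : d ∈ A }, where A is the set of nonnegative integers with only base-3 digits 0 and 1 (and d > 0), the set of P-positions is again exactly A. -/
import Mathlib


/-- P-positions of the comply-number game defined by a family `S` of finite sets of
positive integers. -/
def complyNumP (S : Set (Finset ℕ)) : ℕ → Prop
  | x => ∀ s, s ∈ S → (∀ i ∈ s, i ≤ x) →
      ∃ i, ∃ _ : i ∈ s, ∃ _ : 0 < i, ∃ _ : i ≤ x, ¬ complyNumP S (x - i)
termination_by x => x
decreasing_by all_goals omega

/-- `A3 n` : all base-3 digits of `n` are 0 or 1. -/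
def A3 (n : ℕ) : Prop := ∀ c ∈ Nat.digits 3 n, c ≤ 1

lemma A3_zero : A3 0 := by intro c hc; simp at hc

lemma A3_key (q r : ℕ) (hr : r < 3) : A3 (3 * q + r) ↔ r ≤ 1 ∧ A3 q := by
  rcases Nat.eq_zero_or_pos (3 * q + r) with h | h
  · have hq : q = 0 := by omega
    have hr0 : r = 0 := by omega
    subst hq; subst hr0
    simp [A3]
  · have hdig := Nat.digits_def' (by norm_num : 1 < 3) h
    have hm : (3 * q + r) % 3 = r := by omega
    have hd : (3 * q + r) / 3 = q := by omega
    rw [A3, hdig, hm, hd]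
    simp [A3]

lemma A3_L1 : ∀ d, 0 < d → ∀ a, A3 a → A3 d → A3 (a + d) → ¬ A3 (a + 2 * d) := by
  intro d
  induction d using Nat.strong_induction_on with
  | _ d IH =>
    intro hd a ha hAd hsum hbad
    obtain ⟨ha0, haq⟩ := (A3_key (a / 3) (a % 3) (by omega)).mp
      (by rwa [show 3 * (a / 3) + a % 3 = a by omega])
    obtain ⟨hd0, hdq⟩ := (A3_key (d / 3) (d % 3) (by omega)).mp
      (by rwa [show 3 * (d / 3) + d % 3 = d by omega])
    rcases (by omega : d % 3 = 1 ∨ d % 3 = 0) with h1 | h0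
    · -- lowest digit of d is 1
      obtain ⟨hs0, hsq⟩ := (A3_key ((a + d) / 3) ((a + d) % 3) (by omega)).mp
        (by rwa [show 3 * ((a + d) / 3) + (a + d) % 3 = a + d by omega])
      have ha00 : a % 3 = 0 := by omega
      obtain ⟨hb0, hbq⟩ := (A3_key ((a + 2 * d) / 3) ((a + 2 * d) % 3) (by omega)).mp
        (by rwa [show 3 * ((a + 2 * d) / 3) + (a + 2 * d) % 3 = a + 2 * d by omega])
      omega
    · -- lowest digit of d is 0, recurse on d / 3
      have hsum' : A3 (a / 3 + d / 3) := by
        have := (A3_key ((a + d) / 3) ((a + d) % 3) (by omega)).mp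
          (by rwa [show 3 * ((a + d) / 3) + (a + d) % 3 = a + d by omega])
        have he : (a + d) / 3 = a / 3 + d / 3 := by omega
        rw [he] at this
        exact this.2
      have hbad' : A3 (a / 3 + 2 * (d / 3)) := by
        have := (A3_key ((a + 2 * d) / 3) ((a + 2 * d) % 3) (by omega)).mp
          (by rwa [show 3 * ((a + 2 * d) / 3) + (a + 2 * d) % 3 = a + 2 * d by omega])
        have he : (a + 2 * d) / 3 = a / 3 + 2 * (d / 3) := by omega
        rw [he] at this
        exact this.2
      exact IH (d / 3) (by omega) (by omega) (a / 3) haq hdq hsum' hbad'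

lemma A3_L2 : ∀ x, ¬ A3 x → ∃ a d, 0 < d ∧ A3 a ∧ A3 d ∧ A3 (a + d) ∧ x = a + 2 * d := by
  intro x
  induction x using Nat.strong_induction_on with
  | _ x IH =>
    intro hx
    have hx0 : x ≠ 0 := fun h => hx (h ▸ A3_zero)
    have hkey := A3_key (x / 3) (x % 3) (by omega)
    rw [show 3 * (x / 3) + x % 3 = x by omega] at hkey
    by_cases hr : x % 3 ≤ 1
    · have hq : ¬ A3 (x / 3) := fun h => hx (hkey.mpr ⟨hr, h⟩)
      obtain ⟨a', d', hd', ha', hAd', hs', he'⟩ := IH (x / 3) (by omega) hq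
      refine ⟨3 * a' + x % 3, 3 * d', by omega, ?_, ?_, ?_, by omega⟩
      · exact (A3_key a' (x % 3) (by omega)).mpr ⟨hr, ha'⟩
      · have := (A3_key d' 0 (by omega)).mpr ⟨by omega, hAd'⟩
        rwa [show 3 * d' + 0 = 3 * d' by omega] at this
      · have := (A3_key (a' + d') (x % 3) (by omega)).mpr ⟨hr, hs'⟩
        rwa [show 3 * (a' + d') + x % 3 = 3 * a' + x % 3 + 3 * d' by ring] at this
    · have hr2 : x % 3 = 2 := by omega
      by_cases hq : A3 (x / 3)
      · refine ⟨3 * (x / 3), 1, one_pos, ?_, ?_, ?_, by omega⟩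
        · have := (A3_key (x / 3) 0 (by omega)).mpr ⟨by omega, hq⟩
          rwa [show 3 * (x / 3) + 0 = 3 * (x / 3) by omega] at this
        · intro c hc; simp [Nat.digits_def' (by norm_num : 1 < 3)] at hc; omega
        · exact (A3_key (x / 3) 1 (by omega)).mpr ⟨by omega, hq⟩
      · obtain ⟨a', d', hd', ha', hAd', hs', he'⟩ := IH (x / 3) (by omega) hq
        refine ⟨3 * a', 3 * d' + 1, by omega, ?_, ?_, ?_, by omega⟩
        · have := (A3_key a' 0 (by omega)).mpr ⟨by omega, ha'⟩
          rwa [show 3 * a' + 0 = 3 * a' by omega] at this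
        · exact (A3_key d' 1 (by omega)).mpr ⟨by omega, hAd'⟩
        · have := (A3_key (a' + d') 1 (by omega)).mpr ⟨by omega, hs'⟩
          rwa [show 3 * (a' + d') + 1 = 3 * a' + (3 * d' + 1) by ring] at this

/-- For the restricted move family `T = { {d, 2d} : d ∈ A, d > 0 }`, where `A` is the
set of integers with only base-3 digits 0 and 1, the set of P-positions is again `A`. -/
theorem complyNum_restricted_Ppositions (x : ℕ) :
    complyNumP {s : Finset ℕ | ∃ d : ℕ, 0 < d ∧ (∀ c ∈ Nat.digits 3 d, c ≤ 1) ∧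
        s = {d, 2 * d}} x ↔
      ∀ c ∈ Nat.digits 3 x, c ≤ 1 := by
  show _ ↔ A3 x
  induction x using Nat.strong_induction_on with
  | _ x IH =>
    rw [complyNumP]
    constructor
    · intro h
      by_contra hx
      obtain ⟨a, d, hd, ha, hAd, hs, he⟩ := A3_L2 x hx
      obtain ⟨i, hi, hipos, hile, hP⟩ := h {d, 2 * d} ⟨d, hd, hAd, rfl⟩
        (by intro i hi; simp only [Finset.mem_insert, Finset.mem_singleton] at hi; omega)
      have hi' : i = d ∨ i = 2 * d := by simpa using hi
      rcases hi' with h' | h' <;> rw [h'] at hP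
      · exact hP ((IH (x - d) (by omega)).mpr
          (by rw [show x - d = a + d by omega]; exact hs))
      · exact hP ((IH (x - 2 * d) (by omega)).mpr
          (by rw [show x - 2 * d = a by omega]; exact ha))
    · intro hx s hsS hle
      obtain ⟨d, hd, hAd, rfl⟩ := hsS
      have hd2 : 2 * d ≤ x := hle (2 * d) (by simp)
      by_cases h1 : A3 (x - 2 * d)
      · by_cases h2 : A3 (x - d)
        · exfalso
          apply A3_L1 d hd (x - 2 * d) h1 hAd
            (by rwa [show x - 2 * d + d = x - d by omega])
          rwa [show x - 2 * d + 2 * d = x by omega]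
        · exact ⟨d, by simp, hd, by omega,
            fun hP => h2 ((IH (x - d) (by omega)).mp hP)⟩
      · exact ⟨2 * d, by simp, by omega, hd2,
          fun hP => h1 ((IH (x - 2 * d) (by omega)).mp hP)⟩
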